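/- Permutation lemma. Let n ≥ 1 and let q : Fin n → ℝ satisfy 1 ≤ q i ≤ n for all i, and suppose that for every convex function φ : ℝ → ℝ one has ∑_{i=0}^{n−1} φ(q i) ≤ ∑_{j=1}^{n} φ(j) (i.e. q(1+U_n) is dominated in convex order by 1+U_n, where U_n is uniform on {0,…,n−1}). Then there exists a probability distribution over permutations of Fin n, i.e. weights w : Equiv.Perm (Fin n) → ℝ with w ≥ 0 and ∑_π w(π) = 1, such that for every i, ∑_π w(π)·((π i : ℕ) + 1) = q i. -/

import Mathlib

open Finset

lemma perm_lemma_abel (n : ℕ) (p b : ℕ → ℝ)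
    (hb : ∀ i, i + 1 < n → b i ≤ b (i+1))
    (hsum : ∑ k ∈ range n, p k = ∑ k ∈ range n, ((k:ℝ)+1))
    (hhead : ∀ m, m < n → ∑ k ∈ range m, ((k:ℝ)+1) ≤ ∑ k ∈ range m, p k) :
    ∑ k ∈ range n, b k * p k ≤ ∑ k ∈ range n, b k * ((k:ℝ)+1) := by
  have h := Finset.sum_range_by_parts b (fun k => p k - ((k:ℝ)+1)) n
  have htot : ∑ i ∈ range n, (p i - ((i:ℝ)+1)) = 0 := by
    rw [Finset.sum_sub_distrib, hsum, sub_self]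
  simp only [smul_eq_mul, htot, mul_zero, zero_sub] at h
  have key : ∑ k ∈ range n, b k * (p k - ((k:ℝ)+1)) ≤ 0 := by
    rw [h, neg_nonpos]
    refine Finset.sum_nonneg fun i hi => ?_
    rw [mem_range] at hi
    have h1 : i + 1 < n := by omega
    refine mul_nonneg (by linarith [hb i h1]) ?_
    have := hhead (i+1) h1
    rw [Finset.sum_sub_distrib]
    linarith
  have h2 := Finset.sum_sub_distrib (s := range n) (f := fun k => b k * p k)
    (g := fun k => b k * ((k:ℝ)+1))
  simp_rw [← mul_sub] at h2
  linarith [h2 ▸ key]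

lemma perm_lemma_head (n : ℕ) (p : ℕ → ℝ)
    (hmax : ∀ t : ℝ, ∑ k ∈ range n, max (t - p k) 0 ≤ ∑ k ∈ range n, max (t - ((k:ℝ)+1)) 0)
    (m : ℕ) (hm : m ≤ n) : ∑ k ∈ range m, ((k:ℝ)+1) ≤ ∑ k ∈ range m, p k := by
  have e1 : ∑ k ∈ range n, max ((m:ℝ) - ((k:ℝ)+1)) 0
      = ∑ k ∈ range m, ((m:ℝ) - ((k:ℝ)+1)) := by
    rw [← Finset.sum_range_add_sum_Ico _ hm]
    have h0 : ∑ k ∈ Ico m n, max ((m:ℝ) - ((k:ℝ)+1)) 0 = 0 := by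
      refine Finset.sum_eq_zero fun k hk => ?_
      rw [mem_Ico] at hk
      have : (m:ℝ) - ((k:ℝ)+1) ≤ 0 := by
        have : (m:ℝ) ≤ (k:ℝ) := by exact_mod_cast hk.1
        linarith
      simp [max_eq_right this]
    rw [h0, add_zero]
    refine Finset.sum_congr rfl fun k hk => ?_
    rw [mem_range] at hk
    have : (0:ℝ) ≤ (m:ℝ) - ((k:ℝ)+1) := by
      have : ((k:ℝ)+1) ≤ (m:ℝ) := by exact_mod_cast hk
      linarith
    exact max_eq_left this
  have e2 : ∑ k ∈ range m, ((m:ℝ) - p k) ≤ ∑ k ∈ range m, ((m:ℝ) - ((k:ℝ)+1)) := by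
    calc ∑ k ∈ range m, ((m:ℝ) - p k) ≤ ∑ k ∈ range m, max ((m:ℝ) - p k) 0 :=
          Finset.sum_le_sum fun k _ => le_max_left _ _
      _ ≤ ∑ k ∈ range n, max ((m:ℝ) - p k) 0 :=
          Finset.sum_le_sum_of_subset_of_nonneg (Finset.range_subset_range.2 hm)
            (fun k _ _ => le_max_right _ _)
      _ ≤ ∑ k ∈ range n, max ((m:ℝ) - ((k:ℝ)+1)) 0 := hmax m
      _ = _ := e1
  rw [Finset.sum_sub_distrib, Finset.sum_sub_distrib] at e2
  linarith



/-- Permutation lemma: if `q : Fin n → [1,n]` is dominated in convex order by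
the uniform distribution on `{1,…,n}`, then `q` is the mean rank vector of
some random permutation. -/
theorem permutation_lemma {n : ℕ} (hn : 1 ≤ n) (q : Fin n → ℝ)
    (hq : ∀ i, 1 ≤ q i ∧ q i ≤ n)
    (hconv : ∀ φ : ℝ → ℝ, ConvexOn ℝ Set.univ φ →
      ∑ i, φ (q i) ≤ ∑ j : Fin n, φ (((j : ℕ) : ℝ) + 1)) :
    ∃ w : Equiv.Perm (Fin n) → ℝ,
      (∀ π, 0 ≤ w π) ∧ (∑ π : Equiv.Perm (Fin n), w π = 1) ∧
      ∀ i, ∑ π : Equiv.Perm (Fin n), w π * (((π i : ℕ) : ℝ) + 1) = q i := by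
  classical
  set v : Equiv.Perm (Fin n) → (Fin n → ℝ) :=
    fun σ i => ((σ i : ℕ) : ℝ) + 1 with hv
  -- sum equality
  have hsumq : ∑ i, q i = ∑ j : Fin n, (((j : ℕ) : ℝ) + 1) := by
    have h1 := hconv id (convexOn_id convex_univ)
    have h2 := hconv (fun x => -x)
      ⟨convex_univ, fun x _ y _ a b ha hb hab => le_of_eq (by simp [smul_eq_mul]; ring)⟩
    simp only [id] at h1
    simp only [Finset.sum_neg_distrib] at h2
    linarith
  have hmaxq : ∀ t : ℝ, ∑ i, max (t - q i) 0 ≤ ∑ j : Fin n, max (t - (((j:ℕ):ℝ)+1)) 0 := by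
    intro t
    refine hconv (fun x => max (t - x) 0) ⟨convex_univ, fun x _ y _ a b ha hb hab => ?_⟩
    simp only [smul_eq_mul]
    refine max_le ?_ ?_
    · have e : t - (a*x+b*y) = a*(t-x)+b*(t-y) := by linear_combination (-t) * hab
      rw [e]
      exact add_le_add (mul_le_mul_of_nonneg_left (le_max_left _ _) ha)
        (mul_le_mul_of_nonneg_left (le_max_left _ _) hb)
    · exact add_nonneg (mul_nonneg ha (le_max_right _ _)) (mul_nonneg hb (le_max_right _ _))
  -- membership in convex hull
  have hmem : q ∈ convexHull ℝ (Set.range v) := by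
    by_contra hq'
    have hclosed : IsClosed (convexHull ℝ (Set.range v)) :=
      ((Set.finite_range v).isCompact_convexHull (𝕜 := ℝ)).isClosed
    obtain ⟨f, u, hfu, huq⟩ :=
      geometric_hahn_banach_closed_point (convex_convexHull ℝ _) hclosed hq'
    set c : Fin n → ℝ := fun i => f (fun j => if i = j then 1 else 0) with hc
    have hrep : ∀ x : Fin n → ℝ, f x = ∑ i, x i * c i := by
      intro x
      conv_lhs => rw [pi_eq_sum_univ x]
      rw [map_sum]
      simp only [map_smul, smul_eq_mul, hc]
    set τ := Tuple.sort c with hτ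
    have hmono : Monotone (c ∘ τ) := Tuple.monotone_sort c
    set p : ℕ → ℝ := fun k => if h : k < n then q (τ ⟨k, h⟩) else 0 with hp
    set b : ℕ → ℝ := fun k => if h : k < n then c (τ ⟨k, h⟩) else 0 with hb
    have hpb : ∀ i : Fin n, p i = q (τ i) ∧ b i = c (τ i) := by
      intro i; constructor <;> simp [hp, hb, i.isLt]
    -- hsum for p
    have hsump : ∑ k ∈ range n, p k = ∑ k ∈ range n, ((k:ℝ)+1) := by
      rw [← Fin.sum_univ_eq_sum_range p n, ← Fin.sum_univ_eq_sum_range (fun k => (k:ℝ)+1) n]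
      rw [Finset.sum_congr rfl fun i _ => (hpb i).1]
      rw [show (∑ i : Fin n, q (τ i)) = ∑ i, q i from Equiv.sum_comp τ q]
      exact hsumq
    -- head sums for p
    have hheadp : ∀ m, m < n → ∑ k ∈ range m, ((k:ℝ)+1) ≤ ∑ k ∈ range m, p k := by
      intro m hm
      refine perm_lemma_head n p (fun t => ?_) m hm.le
      rw [← Fin.sum_univ_eq_sum_range (fun k => max (t - p k) 0) n,
        ← Fin.sum_univ_eq_sum_range (fun k => max (t - ((k:ℝ)+1)) 0) n]
      rw [Finset.sum_congr rfl fun i (_ : i ∈ univ) => by rw [(hpb i).1]]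
      rw [show (∑ i : Fin n, max (t - q (τ i)) 0) = ∑ i, max (t - q i) 0 from
        Equiv.sum_comp τ (fun i => max (t - q i) 0)]
      exact hmaxq t
    have hbmono : ∀ i, i + 1 < n → b i ≤ b (i+1) := by
      intro i hi
      have h1 : i < n := by omega
      simp only [hb, dif_pos hi, dif_pos h1]
      exact hmono (by simp [Fin.mk_le_mk])
    have habel := perm_lemma_abel n p b hbmono hsump hheadp
    -- f q ≤ f (v τ.symm)
    have hfq : f q = ∑ k ∈ range n, b k * p k := by
      rw [hrep, ← Equiv.sum_comp τ (fun i => q i * c i),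
        ← Fin.sum_univ_eq_sum_range (fun k => b k * p k) n]
      refine Finset.sum_congr rfl fun i _ => ?_
      rw [(hpb i).1, (hpb i).2, mul_comm]
    have hfv : f (v τ.symm) = ∑ k ∈ range n, b k * ((k:ℝ)+1) := by
      rw [hrep, ← Equiv.sum_comp τ (fun i => v τ.symm i * c i),
        ← Fin.sum_univ_eq_sum_range (fun k => b k * ((k:ℝ)+1)) n]
      refine Finset.sum_congr rfl fun i _ => ?_
      rw [(hpb i).2, hv]
      simp only [Equiv.symm_apply_apply]
      ring
    have hvmem : v τ.symm ∈ convexHull ℝ (Set.range v) :=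
      subset_convexHull ℝ _ (Set.mem_range_self _)
    have := hfu (v τ.symm) hvmem
    rw [hfv] at this
    rw [hfq] at huq
    linarith
  -- extract weights
  have hinj : Function.Injective v := by
    intro σ σ' h
    ext i : 1
    have := congrFun h i
    simp only [hv] at this
    have h2 : ((σ i : ℕ) : ℝ) = ((σ' i : ℕ) : ℝ) := by linarith
    exact Fin.ext (Nat.cast_injective h2)
  have hset : Set.range v = ↑(Finset.univ.image v) := by
    simp
  rw [hset, Finset.mem_convexHull'] at hmem
  obtain ⟨w, hw0, hw1, hwq⟩ := hmem
  refine ⟨fun π => w (v π), ?_, ?_, ?_⟩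
  · intro π
    exact hw0 _ (Finset.mem_image_of_mem v (Finset.mem_univ π))
  · rw [← hw1, Finset.sum_image (fun x _ y _ h => hinj h)]
  · intro i
    have := congrFun hwq i
    rw [Finset.sum_image (fun x _ y _ h => hinj h)] at this
    rw [← this]
    rw [Finset.sum_apply]
    refine Finset.sum_congr rfl fun π _ => ?_
    simp [hv]
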